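/- The multidimensional HLLC flux satisfies the contact property: for any two states U_L = (ρ_L, 0, p/(γ-1)) and U_R = (ρ_R, 0, p/(γ-1)) sharing zero velocity and the same pressure p > 0, and any unit vector n, F^hllc(U_L, U_R; n) = (0, p nᵀ, 0)ᵀ. -/

import Mathlib

open Real

/-- A conservative state (or flux value) for the d-dimensional Euler equations:
(density, momentum, energy). -/
abbrev EulerU (d : ℕ) : Type := ℝ × (Fin d → ℝ) × ℝ

/-- Velocity of a state. -/
noncomputable def vel {d : ℕ} (U : EulerU d) : Fin d → ℝ := fun i => U.2.1 i / U.1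

/-- Pressure of a state (ideal gas law p = (γ-1)ρe). -/
noncomputable def pres {d : ℕ} (γ : ℝ) (U : EulerU d) : ℝ :=
  (γ - 1) * (U.2.2 - U.1 * (∑ i, vel U i ^ 2) / 2)

/-- Normal velocity û = u·n. -/
noncomputable def uhat {d : ℕ} (U : EulerU d) (n : Fin d → ℝ) : ℝ := ∑ i, vel U i * n i

/-- Physical Euler flux in direction n. -/
noncomputable def eulerFlux {d : ℕ} (γ : ℝ) (U : EulerU d) (n : Fin d → ℝ) : EulerU d :=
  (U.1 * uhat U n,
   fun i => U.1 * uhat U n * vel U i + pres γ U * n i,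
   (U.2.2 + pres γ U) * uhat U n)

/-- Sound speed c = √(γp/ρ). -/
noncomputable def sound {d : ℕ} (γ : ℝ) (U : EulerU d) : ℝ :=
  Real.sqrt (γ * pres γ U / U.1)

/-- Left wave speed estimate. -/
noncomputable def SL {d : ℕ} (γ : ℝ) (UL UR : EulerU d) (n : Fin d → ℝ) : ℝ :=
  min (uhat UL n - sound γ UL) (uhat UR n - sound γ UR)

/-- Right wave speed estimate. -/
noncomputable def SR {d : ℕ} (γ : ℝ) (UL UR : EulerU d) (n : Fin d → ℝ) : ℝ :=
  max (uhat UL n + sound γ UL) (uhat UR n + sound γ UR)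

/-- Middle (contact) wave speed estimate. -/
noncomputable def Sstar {d : ℕ} (γ : ℝ) (UL UR : EulerU d) (n : Fin d → ℝ) : ℝ :=
  (pres γ UR - pres γ UL + UL.1 * uhat UL n * (SL γ UL UR n - uhat UL n)
      - UR.1 * uhat UR n * (SR γ UL UR n - uhat UR n))
    / (UL.1 * (SL γ UL UR n - uhat UL n) - UR.1 * (SR γ UL UR n - uhat UR n))

/-- Intermediate star state. -/
noncomputable def Ustar {d : ℕ} (γ : ℝ) (U : EulerU d) (S Ss : ℝ) (n : Fin d → ℝ) :
    EulerU d :=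
  (U.1 * ((S - uhat U n) / (S - Ss)),
   fun i => U.1 * ((S - uhat U n) / (S - Ss)) * vel U i,
   U.1 * ((S - uhat U n) / (S - Ss)) *
     (U.2.2 / U.1 + (Ss - uhat U n) * (Ss + pres γ U / (U.1 * (S - uhat U n)))))

/-- Intermediate star flux F_{*i} = F_i + S_i (U_{*i} - U_i). -/
noncomputable def Fstar {d : ℕ} (γ : ℝ) (U : EulerU d) (S Ss : ℝ) (n : Fin d → ℝ) :
    EulerU d :=
  eulerFlux γ U n + S • (Ustar γ U S Ss n - U)

/-- The multidimensional HLLC numerical flux. -/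
noncomputable def hllc {d : ℕ} (γ : ℝ) (UL UR : EulerU d) (n : Fin d → ℝ) : EulerU d :=
  if 0 ≤ SL γ UL UR n then eulerFlux γ UL n
  else if 0 ≤ Sstar γ UL UR n then Fstar γ UL (SL γ UL UR n) (Sstar γ UL UR n) n
  else if 0 ≤ SR γ UL UR n then Fstar γ UR (SR γ UL UR n) (Sstar γ UL UR n) n
  else eulerFlux γ UR n

/-- Contact property of the HLLC flux: for two states with zero velocity and the same
pressure p, F^hllc(U_L, U_R; n) = (0, p nᵀ, 0)ᵀ. -/
theorem hllc_contact_property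
    (d : ℕ) (γ : ℝ) (hγ : 1 < γ) (ρL ρR p : ℝ)
    (hρL : 0 < ρL) (hρR : 0 < ρR) (hp : 0 < p)
    (n : Fin d → ℝ) (hn : ∑ i, n i ^ 2 = 1) :
    hllc γ (ρL, 0, p / (γ - 1)) (ρR, 0, p / (γ - 1)) n
      = (0, fun i => p * n i, 0) := by
  have hγ0 : γ - 1 ≠ 0 := by linarith
  set UL : EulerU d := (ρL, 0, p / (γ - 1)) with hUL
  set UR : EulerU d := (ρR, 0, p / (γ - 1)) with hUR
  have hvL : vel UL = 0 := by funext i; simp [vel, hUL]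
  have hvR : vel UR = 0 := by funext i; simp [vel, hUR]
  have huL : uhat UL n = 0 := by simp [uhat, hvL]
  have huR : uhat UR n = 0 := by simp [uhat, hvR]
  have hpL : pres γ UL = p := by
    simp [pres, hvL, hUL]; field_simp; simp [vel]
  have hpR : pres γ UR = p := by
    simp [pres, hvR, hUR]; field_simp; simp [vel]
  have hcL : 0 < sound γ UL := by
    rw [sound, hpL]
    apply Real.sqrt_pos.mpr
    apply div_pos (mul_pos (by linarith) hp)
    simpa [hUL] using hρL
  have hcR : 0 < sound γ UR := by
    rw [sound, hpR]
    apply Real.sqrt_pos.mpr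
    apply div_pos (mul_pos (by linarith) hp)
    simpa [hUR] using hρR
  have hSL : SL γ UL UR n < 0 := by
    rw [SL, huL, huR]
    simp only [zero_sub]
    exact min_lt_of_left_lt (by linarith)
  have hSs : Sstar γ UL UR n = 0 := by
    rw [Sstar, huL, huR, hpL, hpR]
    simp
  rw [hllc, if_neg (by linarith), if_pos (by rw [hSs])]
  rw [hSs]
  have hUstar : Ustar γ UL (SL γ UL UR n) 0 n = UL := by
    rw [Ustar, huL, hpL]
    have h1 : (SL γ UL UR n - 0) / (SL γ UL UR n - 0) = 1 := by
      rw [div_self]; simpa using hSL.ne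
    rw [h1]
    have hρL' : UL.1 ≠ 0 := by simpa [hUL] using hρL.ne'
    refine Prod.ext (by simp) (Prod.ext ?_ ?_)
    · funext i; simp [hvL]; rfl
    · simp [mul_div_cancel₀ _ hρL']
  rw [Fstar, hUstar]
  simp only [sub_self, smul_zero, add_zero]
  rw [eulerFlux, huL, hpL]
  refine Prod.ext (by simp) (Prod.ext ?_ (by simp))
  funext i; simp
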